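/- Let (S, Im, Is) satisfy S > 0 and the over-capacity equilibrium equations A − σm·S·Im − σs·S·(Is − C_I) − μS = 0, σm·S·Im + σs·S·(Is − C_I) − (μ+β+ρ)·Im = 0, β·Im − μ·Is − r·C_I = 0. Then f(S) = 0, Im = μR0/σm − μS/(μ+β+ρ), Is = βR0/σm − βS/(μ+β+ρ) − rC_I/μ; and moreover Im > 0 and Is > C_I hold if and only if S < a, where a = ((μ+β+ρ)/σm)·(R0 − σm(μ+r)C_I/(μβ)). -/

import Mathlib

/-- Any solution of the over-capacity equilibrium equations with
`S > 0` has `f(S) = 0`, explicit expressions for `Im`, `Is` in terms of `S`,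
and `Im > 0 ∧ Is > C_I ↔ S < a`. -/
theorem stmt2 (A μ ρ r β σm σs CI : ℝ)
    (hA : 0 < A) (hμ : 0 < μ) (hρ : 0 < ρ) (hr : 0 < r) (hβ : 0 < β)
    (hσm : 0 < σm) (hσs : 0 < σs) (hCI : 0 < CI)
    (R0 p q a : ℝ)
    (hR0 : R0 = A * σm / (μ * (μ + β + ρ)))
    (hp : p = (μ + r) * σm * σs * CI / (μ * (μ * σm + β * σs)))
    (hq : q = μ * σm / (μ * σm + β * σs))
    (ha : a = (μ + β + ρ) / σm * (R0 - σm * (μ + r) * CI / (μ * β)))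
    (f : ℝ → ℝ)
    (hf : ∀ S, f S = S ^ 2 - (μ + β + ρ) / σm * (R0 - p + q) * S
      + ((μ + β + ρ) / σm) ^ 2 * q * R0)
    (S Im Is : ℝ) (hS : 0 < S)
    (e1 : A - σm * S * Im - σs * S * (Is - CI) - μ * S = 0)
    (e2 : σm * S * Im + σs * S * (Is - CI) - (μ + β + ρ) * Im = 0)
    (e3 : β * Im - μ * Is - r * CI = 0) :
    f S = 0 ∧
    Im = μ * R0 / σm - μ * S / (μ + β + ρ) ∧
    Is = β * R0 / σm - β * S / (μ + β + ρ) - r * CI / μ ∧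
    ((0 < Im ∧ CI < Is) ↔ S < a) := by
  have hD : (0:ℝ) < μ + β + ρ := by linarith
  have hM : (0:ℝ) < μ * σm + β * σs := by positivity
  have hDne : μ + β + ρ ≠ 0 := ne_of_gt hD
  have hMne : μ * σm + β * σs ≠ 0 := ne_of_gt hM
  have hμne : μ ≠ 0 := ne_of_gt hμ
  have hβne : β ≠ 0 := ne_of_gt hβ
  have hσmne : σm ≠ 0 := ne_of_gt hσm
  have hImD : Im * (μ + β + ρ) = A - μ * S := by linear_combination -e1 - e2
  have hIsμ : Is * μ = β * Im - r * CI := by linear_combination -e3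
  have haval : a = A / μ - (μ + β + ρ) * (μ + r) * CI / (μ * β) := by
    rw [ha, hR0]
    field_simp
  have key : a - S = (μ + β + ρ) * (β * Im - (μ + r) * CI) / (μ * β) := by
    rw [haval]
    field_simp
    linear_combination (-β) * hImD
  have hXe : β * Im - (μ + r) * CI = μ * (Is - CI) := by linear_combination -hIsμ
  refine ⟨?_, ?_, ?_, ?_⟩
  · rw [hf, hR0, hp, hq]
    field_simp
    linear_combination (-1) *
      ((μ+β+ρ)*μ*e2 + (μ+β+ρ)*σs*S*e3 + (S*(μ*σm+β*σs) - μ*(μ+β+ρ))*(e1 + e2))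
  · rw [hR0]
    field_simp
    linear_combination hImD
  · rw [hR0]
    field_simp
    linear_combination (μ+β+ρ) * hIsμ + β * hImD
  · constructor
    · rintro ⟨h1, h2⟩
      have hX : 0 < β * Im - (μ + r) * CI := by
        rw [hXe]; exact mul_pos hμ (by linarith)
      have hpos : 0 < a - S := by
        rw [key]; exact div_pos (mul_pos hD hX) (by positivity)
      linarith
    · intro h
      have h0 : 0 < a - S := by linarith
      rw [key, lt_div_iff₀ (by positivity : (0:ℝ) < μ * β)] at h0
      have hX : 0 < β * Im - (μ + r) * CI := by
        rcases mul_pos_iff.mp (by linarith : 0 < (μ + β + ρ) * (β * Im - (μ + r) * CI)) with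
          ⟨_, h'⟩ | ⟨h', _⟩
        · exact h'
        · linarith
      have hrc : 0 < (μ + r) * CI := by positivity
      have hβIm : 0 < β * Im := by linarith
      refine ⟨?_, ?_⟩
      · rcases mul_pos_iff.mp hβIm with ⟨_, h'⟩ | ⟨h', _⟩
        · exact h'
        · linarith
      · rw [hXe] at hX
        rcases mul_pos_iff.mp hX with ⟨_, h'⟩ | ⟨h', _⟩
        · linarith
        · linarith
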